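/- Let c be a Coxeter element of W with s initial in c, and let ω_c be the skew-symmetric form ω_c(β,β') = E_c(β,β') − E_c(β',β). Then for every reflection t of W, ω_c(α_s, β_t) ≥ 0, with equality only if s and t commute. -/

import Mathlib

/-- A geometric (reflection) representation of the Coxeter system `cs`, arising from a
symmetrizable generalized Cartan matrix `a` with symmetrizing function `δ`.  The field `α`
records the simple roots (a basis of `V`), `ρ` is the reflection representation, and `β`
assigns to each reflection `t = w sᵢ w⁻¹` its positive root (the member of `±(w · αᵢ)` lying
in the nonnegative span of the simple roots). -/
structure CoxeterGeomRep {B W : Type*} [Group W] (M : CoxeterMatrix B)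
    (cs : CoxeterSystem M W) (V : Type*) [AddCommGroup V] [Module ℝ V] where
  /-- the generalized Cartan matrix -/
  a : B → B → ℝ
  /-- the symmetrizing function -/
  δ : B → ℝ
  δ_pos : ∀ i, 0 < δ i
  symmetrize : ∀ i j, δ i * a i j = δ j * a j i
  δ_conj : ∀ i j, IsConj (cs.simple i) (cs.simple j) → δ i = δ j
  a_diag : ∀ i, a i i = 2
  a_offdiag : ∀ i j, i ≠ j → a i j ≤ 0
  a_fin : ∀ i j, i ≠ j → M i j ≠ 0 →
    a i j * a j i = 4 * Real.cos (Real.pi / (M i j : ℝ)) ^ 2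
  a_inf : ∀ i j, M i j = 0 → 4 ≤ a i j * a j i
  a_zero : ∀ i j, a i j = 0 ↔ a j i = 0
  /-- the simple roots, a basis of `V` -/
  α : Module.Basis B ℝ V
  /-- the reflection representation of `W` on `V` -/
  ρ : W →* (V ≃ₗ[ℝ] V)
  act : ∀ i j, ρ (cs.simple i) (α j) = α j - a i j • α i
  /-- the positive root associated to each reflection -/
  β : W → V
  β_root : ∀ (w : W) (i : B),
    β (w * cs.simple i * w⁻¹) = ρ w (α i) ∨ β (w * cs.simple i * w⁻¹) = -(ρ w (α i))
  β_pos : ∀ t, cs.IsReflection t →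
    ∃ c : B →₀ ℝ, (∀ i, 0 ≤ c i) ∧ β t = c.sum fun i r => r • α i

/-- `v` lies in the nonnegative linear span (the cone generated by) the set `X`. -/
def InCone {V : Type*} [AddCommGroup V] [Module ℝ V] (X : Set V) (v : V) : Prop :=
  ∃ (n : ℕ) (x : Fin n → V) (c : Fin n → ℝ),
    (∀ k, x k ∈ X) ∧ (∀ k, 0 ≤ c k) ∧ v = ∑ k, c k • x k

/-- `R` is the set of canonical generators of the reflection subgroup `W'`:  every positive
root of a reflection of `W'` lies in the nonnegative span of `{β_r : r ∈ R}`, and no `β_r`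
lies in the nonnegative span of the positive roots of the other reflections of `W'`. -/
def IsCanonicalGenerators {B W V : Type*} [Group W] [AddCommGroup V] [Module ℝ V]
    {M : CoxeterMatrix B} (cs : CoxeterSystem M W) (g : CoxeterGeomRep M cs V)
    (W' : Subgroup W) (R : Set W) : Prop :=
  R ⊆ {t | t ∈ W' ∧ cs.IsReflection t} ∧
  (∀ t ∈ W', cs.IsReflection t → InCone (g.β '' R) (g.β t)) ∧
  ∀ r ∈ R, ¬ InCone (g.β '' ({t | t ∈ W' ∧ cs.IsReflection t} \ {r})) (g.β r)
/-- `F` is the Euler form `E_c` for the Coxeter element `c` given by the reduced word `l`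
(an enumeration of the simple generators):  on simple coroots and simple roots it is given
by `E_c(α^∨_{s_i}, α_{s_j}) = a_{s_i s_j}` if `i > j`, `1` if `i = j`, `0` if `i < j`. -/
def IsEulerForm {B W V : Type*} [Group W] [AddCommGroup V] [Module ℝ V]
    {M : CoxeterMatrix B} (cs : CoxeterSystem M W) (g : CoxeterGeomRep M cs V)
    (l : List B) (F : V →ₗ[ℝ] V →ₗ[ℝ] ℝ) : Prop :=
  ∀ i j : Fin l.length,
    F ((g.δ (l.get i))⁻¹ • g.α (l.get i)) (g.α (l.get j)) =
      if (j : ℕ) < (i : ℕ) then g.a (l.get i) (l.get j)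
      else if (i : ℕ) = (j : ℕ) then 1 else 0

namespace CGRAux

open CoxeterSystem Real

variable {B W V : Type*} [Group W] [AddCommGroup V] [Module ℝ V]
  {M : CoxeterMatrix B} {cs : CoxeterSystem M W} (g : CoxeterGeomRep M cs V)

/-- alternating-word vector recursion -/
lemma alt_step (i j : B) (k : ℕ) :
    g.ρ (cs.wordProd (alternatingWord i j (k+1))) (g.α i)
      = g.ρ (cs.simple (if Even k then j else i))
          (g.ρ (cs.wordProd (alternatingWord i j k)) (g.α i)) := by
  rw [alternatingWord_succ', cs.wordProd_cons, map_mul]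
  rfl

lemma rho_s_i (i j : B) (lam mu : ℝ) :
    g.ρ (cs.simple i) (lam • g.α i + mu • g.α j)
      = (-lam - g.a i j * mu) • g.α i + mu • g.α j := by
  rw [map_add, map_smul, map_smul, g.act i i, g.act i j, g.a_diag i]
  module

lemma rho_s_j (i j : B) (lam mu : ℝ) :
    g.ρ (cs.simple j) (lam • g.α i + mu • g.α j)
      = lam • g.α i + (-mu - g.a j i * lam) • g.α j := by
  rw [map_add, map_smul, map_smul, g.act j i, g.act j j, g.a_diag j]
  module

/-- The dihedral positivity lemma. -/
lemma dihedral_pos (i j : B) (hij : i ≠ j) (k : ℕ)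
    (hk : M i j = 0 ∨ k + 1 ≤ M i j) :
    ∃ lam mu : ℝ, 0 ≤ lam ∧ 0 ≤ mu ∧
      g.ρ (cs.wordProd (alternatingWord i j k)) (g.α i) = lam • g.α i + mu • g.α j := by
  set p := g.a i j with hpdef
  set q := g.a j i with hqdef
  have hp : p ≤ 0 := g.a_offdiag i j hij
  have hq : q ≤ 0 := g.a_offdiag j i hij.symm
  rcases hk with hM | hk'
  · -- infinite case
    have h4 : 4 ≤ p * q := by
      have := g.a_inf i j hM; linarith [this]
    have aux : ∀ n : ℕ, ∃ lam mu : ℝ, 0 ≤ lam ∧ 0 ≤ mu ∧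
        g.ρ (cs.wordProd (alternatingWord i j n)) (g.α i) = lam • g.α i + mu • g.α j ∧
        (if Even n then 2*mu ≤ -q*lam else 2*lam ≤ -p*mu) := by
      intro n
      induction n with
      | zero =>
        refine ⟨1, 0, by norm_num, le_refl 0, ?_, ?_⟩
        · simp [alternatingWord]
        · simp only [if_pos (Even.zero)]; linarith
      | succ n ih =>
        obtain ⟨lam, mu, hlam, hmu, heq, hcond⟩ := ih
        rw [alt_step]
        by_cases hn : Even n
        · rw [if_pos hn] at hcond
          rw [if_pos hn, heq, rho_s_j]
          refine ⟨lam, -mu - q*lam, hlam, by nlinarith, rfl, ?_⟩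
          have hodd : ¬ Even (n+1) := by simp [hn, parity_simps]
          rw [if_neg hodd]
          nlinarith
        · rw [if_neg hn] at hcond
          rw [if_neg hn, heq, rho_s_i]
          refine ⟨-lam - p*mu, mu, by nlinarith, hmu, rfl, ?_⟩
          have heven : Even (n+1) := by simp [hn, parity_simps]
          rw [if_pos heven]
          nlinarith
    obtain ⟨lam, mu, h1, h2, h3, -⟩ := aux k
    exact ⟨lam, mu, h1, h2, h3⟩
  · -- finite case
    match k, hk' with
    | 0, _ => exact ⟨1, 0, by norm_num, le_refl 0, by simp [alternatingWord]⟩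
    | 1, _ =>
      refine ⟨1, -q, by norm_num, by linarith, ?_⟩
      have : alternatingWord i j 1 = [j] := rfl
      rw [this]
      have : cs.wordProd [j] = cs.simple j := by simp [CoxeterSystem.wordProd]
      rw [this, g.act j i]
      module
    | (k+2), hk' =>
      have hM : M i j ≠ 0 := by omega
      have hm2 : M i j ≠ 1 := M.off_diagonal i j hij
      have hm3 : 3 ≤ M i j := by omega
      set m : ℝ := (M i j : ℝ) with hmdef
      have hm3' : (3:ℝ) ≤ m := by rw [hmdef]; exact_mod_cast hm3
      set θ : ℝ := Real.pi / m with hθdef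
      have hθpos : 0 < θ := div_pos Real.pi_pos (by linarith)
      have hθlt : θ < Real.pi / 2 := by
        rw [hθdef, div_lt_div_iff₀ (by linarith) (by norm_num)]
        nlinarith [Real.pi_pos]
      have hsθ : 0 < Real.sin θ := Real.sin_pos_of_pos_of_lt_pi hθpos
        (by nlinarith [Real.pi_pos])
      have hcθ : 0 < Real.cos θ := Real.cos_pos_of_mem_Ioo ⟨by linarith, hθlt⟩
      have hpq : p * q = 4 * Real.cos θ ^ 2 := g.a_fin i j hij hM
      have hmθ : m * θ = Real.pi := by
        rw [hθdef]; field_simp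
      set c := Real.cos θ with hcdef
      set sθ := Real.sin θ with hsdef
      have key : ∀ A : ℝ, Real.sin (A+θ) = 2*c*Real.sin A - Real.sin (A-θ) := by
        intro A; rw [Real.sin_add, Real.sin_sub]; ring
      -- the closed-form coefficients
      set X : ℕ → ℝ := fun n => Real.sin ((2*(n:ℝ)+1)*θ)/sθ with hX
      set Y : ℕ → ℝ := fun n => -q * Real.sin ((2*(n:ℝ))*θ)/(2*sθ*c) with hY
      have claim : ∀ n : ℕ,
          (g.ρ (cs.wordProd (alternatingWord i j (2*n))) (g.α i)
            = X n • g.α i + Y n • g.α j) ∧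
          (g.ρ (cs.wordProd (alternatingWord i j (2*n+1))) (g.α i)
            = X n • g.α i + Y (n+1) • g.α j) := by
        intro n
        induction n with
        | zero =>
          constructor
          · have h0 : X 0 = 1 := by
              simp only [hX]; norm_num; exact div_self (ne_of_gt hsθ)
            have h1 : Y 0 = 0 := by simp [hY]
            rw [h0, h1]
            simp [alternatingWord]
          · have h0 : X 0 = 1 := by
              simp only [hX]; norm_num; exact div_self (ne_of_gt hsθ)
            have h1 : Y 1 = -q := by
              simp only [hY]
              push_cast
              rw [show (2*(1:ℝ))*θ = 2*θ by ring, Real.sin_two_mul]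
              field_simp
              rfl
            rw [h0, h1]
            have e1 : alternatingWord i j 1 = [j] := rfl
            have e2 : cs.wordProd [j] = cs.simple j := by simp [CoxeterSystem.wordProd]
            rw [show 2*0+1 = 1 from rfl, e1, e2, g.act j i]
            module
        | succ n ih =>
          obtain ⟨ih1, ih2⟩ := ih
          have step1 : g.ρ (cs.wordProd (alternatingWord i j (2*(n+1)))) (g.α i)
              = X (n+1) • g.α i + Y (n+1) • g.α j := by
            have e : 2*(n+1) = (2*n+1)+1 := by ring
            rw [e, alt_step]
            have hodd : ¬ Even (2*n+1) := by simp [parity_simps]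
            rw [if_neg hodd, ih2, rho_s_i]
            congr 1
            · congr 1
              -- -X n - p * Y (n+1) = X (n+1)
              simp only [hX, hY]
              push_cast
              have harg0 : (2*((n:ℝ)+1))*θ = (2*(n:ℝ)+2)*θ := by ring
              have harg1 : (2*((n:ℝ)+1)+1)*θ = (2*(n:ℝ)+2)*θ + θ := by ring
              have harg2 : (2*(n:ℝ)+1)*θ = (2*(n:ℝ)+2)*θ - θ := by ring
              simp only [← hpdef, ← hqdef]
              rw [harg0, harg1, key, ← harg2]
              field_simp
              rw [show 2*θ*((n:ℝ)+1) = (2*(n:ℝ)+2)*θ by ring]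
              linear_combination (Real.sin ((2*(n:ℝ)+2)*θ)) * hpq
          refine ⟨step1, ?_⟩
          have e : 2*(n+1)+1 = (2*(n+1))+1 := rfl
          rw [e, alt_step]
          have heven : Even (2*(n+1)) := by simp [parity_simps]
          rw [if_pos heven, step1, rho_s_j]
          congr 1
          congr 1
          -- -Y (n+1) - q * X (n+1) = Y (n+2)
          simp only [hX, hY]
          push_cast
          have harg1 : (2*((n:ℝ)+1+1))*θ = (2*((n:ℝ)+1)+1)*θ + θ := by ring
          have harg2 : (2*((n:ℝ)+1))*θ = (2*((n:ℝ)+1)+1)*θ - θ := by ring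
          simp only [← hpdef, ← hqdef]
          rw [harg1, key, harg2]
          field_simp
          ring
      -- positivity
      have hsin : ∀ r : ℕ, r ≤ M.M i j → 0 ≤ Real.sin ((r:ℝ)*θ) := by
        intro r hr
        apply Real.sin_nonneg_of_nonneg_of_le_pi
        · positivity
        · rw [← hmθ]
          apply mul_le_mul_of_nonneg_right _ (le_of_lt hθpos)
          rw [hmdef]
          exact_mod_cast hr
      have hXpos : ∀ n : ℕ, 2*n+1 ≤ M.M i j → 0 ≤ X n := by
        intro n hn
        apply div_nonneg _ (le_of_lt hsθ)
        have := hsin (2*n+1) hn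
        push_cast at this
        exact this
      have hYpos : ∀ n : ℕ, 2*n ≤ M.M i j → 0 ≤ Y n := by
        intro n hn
        apply div_nonneg _ (by positivity)
        have := hsin (2*n) hn
        push_cast at this
        exact mul_nonneg (by linarith) this
      rcases Nat.even_or_odd (k+2) with he | ho
      · obtain ⟨n, hn⟩ := he
        have hn' : k + 2 = 2*n := by omega
        rw [hn']
        exact ⟨X n, Y n, hXpos n (by omega), hYpos n (by omega), (claim n).1⟩
      · obtain ⟨n, hn⟩ := ho
        rw [hn]
        exact ⟨X n, Y (n+1), hXpos n (by omega), hYpos (n+1) (by omega), (claim n).2⟩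

lemma rho_mul_apply (w₁ w₂ : W) (x : V) :
    g.ρ (w₁ * w₂) x = g.ρ w₁ (g.ρ w₂ x) := by
  rw [map_mul]; rfl

lemma repr_one_nonneg (i b : B) : 0 ≤ g.α.repr (g.ρ 1 (g.α i)) b := by
  classical
  rw [map_one]
  show 0 ≤ g.α.repr (g.α i) b
  rw [g.α.repr_self, Finsupp.single_apply]
  split <;> norm_num

/-- Main positivity lemma: if `i` is not a right descent of `w`, then `ρ w (α i)`
is a nonnegative combination of simple roots. -/
lemma pos_of_not_rightDescent :
    ∀ (n : ℕ) (w : W), cs.length w = n → ∀ i : B, ¬ cs.IsRightDescent w i →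
      ∀ b : B, 0 ≤ g.α.repr (g.ρ w (g.α i)) b := by
  intro n
  induction n using Nat.strong_induction_on with
  | _ n IH =>
    intro w hw i hi b
    rcases eq_or_ne w 1 with rfl | hne
    · exact repr_one_nonneg g i b
    · obtain ⟨j, hj⟩ := cs.exists_rightDescent_of_ne_one hne
      have hij : i ≠ j := fun h => hi (h ▸ hj)
      classical
      have hsing : ∀ y : B, cs.wordProd [y] = cs.simple y := by
        intro y; simp [CoxeterSystem.wordProd]
      set Q : B → B → ℕ → Prop := fun x y k =>
        cs.length (w * (cs.wordProd (alternatingWord x y k))⁻¹) + k = cs.length w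
        with hQdef
      set P : ℕ → Prop := fun k => Q i j k ∨ Q j i k with hPdef
      have hP1 : P 1 := by
        left
        show cs.length (w * (cs.wordProd (alternatingWord i j 1))⁻¹) + 1 = cs.length w
        have : alternatingWord i j 1 = [j] := rfl
        rw [this, hsing, cs.inv_simple]
        exact cs.isRightDescent_iff.mp hj
      have h1w : 1 ≤ cs.length w := by
        have := hj
        unfold CoxeterSystem.IsRightDescent at this
        omega
      set k₀ := Nat.findGreatest P (cs.length w) with hk₀def
      have hPk : P k₀ := Nat.findGreatest_spec h1w hP1
      have hk1 : 1 ≤ k₀ := Nat.le_findGreatest h1w hP1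
      have hmax : ∀ k, k ≤ cs.length w → P k → k ≤ k₀ := fun k hkle hk =>
        Nat.le_findGreatest hkle hk
      -- the common part: no descents of u
      have common : ∀ x y : B, x ≠ y → (∀ k, Q x y k → P k) → Q x y k₀ →
          ¬ cs.IsRightDescent (w * (cs.wordProd (alternatingWord x y k₀))⁻¹) x ∧
          ¬ cs.IsRightDescent (w * (cs.wordProd (alternatingWord x y k₀))⁻¹) y := by
        intro x y hxy hQP hQ
        set v := cs.wordProd (alternatingWord x y k₀) with hvdef
        set u := w * v⁻¹ with hudef
        have huv : w = u * v := by rw [hudef]; group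
        have hlu : cs.length u + k₀ = cs.length w := hQ
        -- extension letter
        have hz : ¬ cs.IsRightDescent u (if Even k₀ then y else x) := by
          intro hdz
          set z := if Even k₀ then y else x
          have hQ' : Q x y (k₀ + 1) := by
            show cs.length (w * (cs.wordProd (alternatingWord x y (k₀+1)))⁻¹) + (k₀+1)
              = cs.length w
            have : cs.wordProd (alternatingWord x y (k₀+1)) = cs.simple z * v := by
              rw [alternatingWord_succ', cs.wordProd_cons]
            rw [this, mul_inv_rev, cs.inv_simple, ← mul_assoc, ← hudef]
            have := cs.isRightDescent_iff.mp hdz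
            omega
          have hb : k₀ + 1 ≤ cs.length w := by
            have := hQ'
            omega
          have := hmax (k₀+1) hb (hQP _ hQ')
          omega
        -- head letter
        obtain ⟨n', hn'⟩ : ∃ n', k₀ = n' + 1 := ⟨k₀ - 1, by omega⟩
        rw [hn'] at hz hlu
        have hh : ¬ cs.IsRightDescent u (if Even n' then y else x) := by
          intro hdh
          set h := if Even n' then y else x
          have hvtail : v = cs.simple h * cs.wordProd (alternatingWord x y n') := by
            rw [hvdef, hn', alternatingWord_succ', cs.wordProd_cons]
          have h1 : cs.length w ≤ cs.length (u * cs.simple h)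
              + cs.length (cs.wordProd (alternatingWord x y n')) := by
            calc cs.length w = cs.length ((u * cs.simple h) * cs.wordProd (alternatingWord x y n')) := by
                  rw [huv, hvtail]; group
            _ ≤ _ := cs.length_mul_le _ _
          have h2 : cs.length (cs.wordProd (alternatingWord x y n')) ≤ n' := by
            have := cs.length_wordProd_le (alternatingWord x y n')
            rwa [length_alternatingWord] at this
          have h3 := cs.isRightDescent_iff.mp hdh
          omega
        rcases Nat.even_or_odd n' with he | ho
        · have e1 : ¬ Even (n' + 1) := by simp [he, parity_simps]
          rw [if_neg e1] at hz
          rw [if_pos he] at hh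
          exact ⟨hz, hh⟩
        · have e1 : Even (n' + 1) := by simp [Nat.not_even_iff_odd.mpr ho, parity_simps]
          rw [if_pos e1] at hz
          rw [if_neg (Nat.not_even_iff_odd.mpr ho)] at hh
          exact ⟨hh, hz⟩
      -- the lower bound on ℓ(v * sᵢ), valid for both types
      have lower : ∀ x y : B, Q x y k₀ →
          k₀ + 1 ≤ cs.length (cs.wordProd (alternatingWord x y k₀) * cs.simple i) := by
        intro x y hQ
        set v := cs.wordProd (alternatingWord x y k₀) with hvdef
        set u := w * v⁻¹ with hudef
        have hlu : cs.length u + k₀ = cs.length w := hQ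
        have h1 : cs.length (w * cs.simple i) = cs.length w + 1 :=
          cs.not_isRightDescent_iff.mp hi
        have h2 : cs.length (w * cs.simple i) ≤ cs.length u + cs.length (v * cs.simple i) := by
          calc cs.length (w * cs.simple i) = cs.length (u * (v * cs.simple i)) := by
                rw [hudef]; group
          _ ≤ _ := cs.length_mul_le _ _
        omega
      rcases hPk with hQ | hQ
      · -- the good type : alternating word ending in j
        set v := cs.wordProd (alternatingWord i j k₀) with hvdef
        set u := w * v⁻¹ with hudef
        have huv : w = u * v := by rw [hudef]; group
        have hlu : cs.length u + k₀ = cs.length w := hQ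
        obtain ⟨hux, huy⟩ := common i j hij (fun k => Or.inl) hQ
        have hlow := lower i j hQ
        rw [← hvdef] at hlow
        have hup : cs.length (v * cs.simple i) ≤ k₀ + 1 := by
          have hcc : v * cs.simple i = cs.wordProd (alternatingWord j i (k₀+1)) := by
            rw [alternatingWord_succ, cs.wordProd_concat, hvdef]
          rw [hcc]
          have := cs.length_wordProd_le (alternatingWord j i (k₀+1))
          rwa [length_alternatingWord] at this
        have hbound : M i j = 0 ∨ k₀ + 1 ≤ M i j := by
          by_cases hM0 : M i j = 0
          · exact Or.inl hM0
          · right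
            by_contra hlt
            have hred : cs.IsReduced (alternatingWord j i (k₀+1)) := by
              unfold CoxeterSystem.IsReduced
              rw [length_alternatingWord]
              have hcc : v * cs.simple i = cs.wordProd (alternatingWord j i (k₀+1)) := by
                rw [alternatingWord_succ, cs.wordProd_concat, hvdef]
              rw [← hcc]
              omega
            exact cs.not_isReduced_alternatingWord j i
              (by rw [M.symmetric]; exact hM0) (by rw [M.symmetric]; omega) hred
        obtain ⟨lam, mu, hl, hm, hv⟩ := dihedral_pos g i j hij k₀ hbound
        have hre : g.ρ w (g.α i) = lam • g.ρ u (g.α i) + mu • g.ρ u (g.α j) := by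
          rw [huv, rho_mul_apply, hvdef, hv, map_add, map_smul, map_smul]
        rw [hre, map_add, map_smul, map_smul]
        have IH1 := IH (cs.length u) (by omega) u rfl i hux b
        have IH2 := IH (cs.length u) (by omega) u rfl j huy b
        simp only [Finsupp.coe_add, Finsupp.coe_smul, Pi.add_apply, Pi.smul_apply,
          smul_eq_mul]
        exact add_nonneg (mul_nonneg hl IH1) (mul_nonneg hm IH2)
      · -- the bad type : contradiction
        exfalso
        have hlow := lower j i hQ
        have hup : cs.length (cs.wordProd (alternatingWord j i k₀) * cs.simple i)
            ≤ k₀ - 1 := by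
          obtain ⟨n', hn'⟩ : ∃ n', k₀ = n' + 1 := ⟨k₀ - 1, by omega⟩
          rw [hn']
          have hcc : cs.wordProd (alternatingWord j i (n'+1)) * cs.simple i
              = cs.wordProd (alternatingWord i j n') := by
            rw [alternatingWord_succ, cs.wordProd_concat]
            simp [mul_assoc, cs.simple_mul_simple_self]
          rw [hcc]
          have := cs.length_wordProd_le (alternatingWord i j n')
          rw [length_alternatingWord] at this
          omega
        omega

/-- The invariant symmetric bilinear form. -/
noncomputable def Kf : V →ₗ[ℝ] V →ₗ[ℝ] ℝ :=
  (Finsupp.lsum ℝ (fun i => LinearMap.toSpanSingleton ℝ (V →ₗ[ℝ] ℝ)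
      ((Finsupp.lsum ℝ (fun j => LinearMap.toSpanSingleton ℝ ℝ (g.δ i * g.a i j))).comp
        (g.α.repr.toLinearMap)))).comp (g.α.repr.toLinearMap)

lemma Kf_basis (i j : B) : Kf g (g.α i) (g.α j) = g.δ i * g.a i j := by
  simp [Kf, Module.Basis.repr_self, Finsupp.lsum_single, LinearMap.toSpanSingleton_apply]

lemma Kf_symm (u v : V) : Kf g u v = Kf g v u := by
  have h : (Kf g) = (Kf g).flip := by
    apply g.α.ext; intro i; apply g.α.ext; intro j
    simp only [LinearMap.flip_apply, Kf_basis]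
    exact g.symmetrize i j
  conv_lhs => rw [h]
  rfl

lemma Kf_self (i : B) : Kf g (g.α i) (g.α i) = 2 * g.δ i := by
  rw [Kf_basis, g.a_diag]; ring

lemma rho_simple_apply (i : B) (v : V) :
    g.ρ (cs.simple i) v = v - ((g.δ i)⁻¹ * Kf g (g.α i) v) • g.α i := by
  have h : (g.ρ (cs.simple i)).toLinearMap
      = LinearMap.id - (LinearMap.toSpanSingleton ℝ V (g.α i)).comp
          ((g.δ i)⁻¹ • (Kf g (g.α i))) := by
    apply g.α.ext; intro j
    simp only [LinearEquiv.coe_coe, LinearMap.sub_apply, LinearMap.id_apply,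
      LinearMap.comp_apply, LinearMap.smul_apply, Kf_basis,
      LinearMap.toSpanSingleton_apply, smul_eq_mul]
    rw [g.act i j]
    congr 2
    rw [inv_mul_cancel_left₀ (ne_of_gt (g.δ_pos i))]
  have h2 := LinearMap.congr_fun h v
  simpa [LinearMap.toSpanSingleton_apply] using h2

lemma Kf_rho_simple (i : B) (u v : V) :
    Kf g (g.ρ (cs.simple i) u) (g.ρ (cs.simple i) v) = Kf g u v := by
  rw [rho_simple_apply, rho_simple_apply]
  have hδ : g.δ i ≠ 0 := ne_of_gt (g.δ_pos i)
  have hsymmu : Kf g u (g.α i) = Kf g (g.α i) u := Kf_symm g u (g.α i)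
  simp only [map_sub, map_smul, LinearMap.sub_apply, LinearMap.smul_apply, smul_eq_mul,
    Kf_self, hsymmu]
  field_simp
  ring

lemma Kf_rho (w : W) (u v : V) : Kf g (g.ρ w u) (g.ρ w v) = Kf g u v := by
  obtain ⟨ω, -, rfl⟩ := cs.exists_reduced_word' w
  induction ω generalizing u v with
  | nil => simp [cs.wordProd_nil, map_one]
  | cons a ω ih =>
    rw [cs.wordProd_cons, rho_mul_apply, rho_mul_apply, Kf_rho_simple, ih]

lemma rho_inv_cancel (w : W) (v : V) : g.ρ w (g.ρ w⁻¹ v) = v := by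
  rw [← rho_mul_apply, mul_inv_cancel, map_one]; rfl

lemma Kf_beta_pos {t : W} (ht : cs.IsReflection t) : 0 < Kf g (g.β t) (g.β t) := by
  obtain ⟨w, i, rfl⟩ := ht
  have hpos : 0 < Kf g (g.ρ w (g.α i)) (g.ρ w (g.α i)) := by
    rw [Kf_rho, Kf_self]
    linarith [g.δ_pos i]
  rcases g.β_root w i with hβ | hβ <;> rw [hβ]
  · exact hpos
  · simpa using hpos

lemma rho_reflection {t : W} (ht : cs.IsReflection t) (v : V) :
    g.ρ t v = v - (2 * Kf g (g.β t) v / Kf g (g.β t) (g.β t)) • g.β t := by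
  obtain ⟨w, i, rfl⟩ := ht
  have hδ : g.δ i ≠ 0 := ne_of_gt (g.δ_pos i)
  have hexp : g.ρ (w * cs.simple i * w⁻¹) v
      = v - ((g.δ i)⁻¹ * Kf g (g.ρ w (g.α i)) v) • g.ρ w (g.α i) := by
    rw [rho_mul_apply, rho_mul_apply, rho_simple_apply, map_sub, map_smul,
      rho_inv_cancel]
    congr 3
    calc Kf g (g.α i) (g.ρ w⁻¹ v) = Kf g (g.ρ w (g.α i)) (g.ρ w (g.ρ w⁻¹ v)) :=
          (Kf_rho g w _ _).symm
    _ = Kf g (g.ρ w (g.α i)) v := by rw [rho_inv_cancel]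
  have hKK : Kf g (g.ρ w (g.α i)) (g.ρ w (g.α i)) = 2 * g.δ i := by
    rw [Kf_rho, Kf_self]
  rcases g.β_root w i with hβ | hβ <;> rw [hβ, hexp]
  · rw [hKK]
    match_scalars
    · ring
    · field_simp
  · have h1 : Kf g (-(g.ρ w (g.α i))) v = - (Kf g (g.ρ w (g.α i)) v) := by simp
    have h2 : Kf g (-(g.ρ w (g.α i))) (-(g.ρ w (g.α i))) = 2 * g.δ i := by
      simpa using hKK
    rw [h1, h2]
    match_scalars
    · ring
    · field_simp

lemma rho_faithful {u : W} (h : ∀ v : V, g.ρ u v = v) : u = 1 := by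
  by_contra hne
  obtain ⟨j, hj⟩ := cs.exists_rightDescent_of_ne_one hne
  have hnd : ¬ cs.IsRightDescent (u * cs.simple j) j := by
    unfold CoxeterSystem.IsRightDescent at hj ⊢
    rw [mul_assoc, cs.simple_mul_simple_self, mul_one]
    omega
  have hpos := pos_of_not_rightDescent g (cs.length (u * cs.simple j))
    (u * cs.simple j) rfl j hnd j
  have heq : g.ρ (u * cs.simple j) (g.α j) = -(g.α j) := by
    rw [rho_mul_apply]
    have : g.ρ (cs.simple j) (g.α j) = -(g.α j) := by
      rw [g.act j j, g.a_diag]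
      module
    rw [this, map_neg, h]
  rw [heq, map_neg] at hpos
  simp only [Module.Basis.repr_self, Finsupp.coe_neg, Pi.neg_apply] at hpos
  rw [Finsupp.single_eq_same] at hpos
  linarith

lemma beta_inj {t₁ t₂ : W} (h₁ : cs.IsReflection t₁) (h₂ : cs.IsReflection t₂)
    (h : g.β t₁ = g.β t₂) : t₁ = t₂ := by
  have hr : ∀ v, g.ρ t₁ v = g.ρ t₂ v := by
    intro v; rw [rho_reflection g h₁, rho_reflection g h₂, h]
  have hone : ∀ v : V, g.ρ (t₁ * t₂) v = v := by
    intro v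
    rw [rho_mul_apply, show g.ρ t₂ v = g.ρ t₁ v from (hr v).symm, ← rho_mul_apply,
      h₁.mul_self, map_one]
    rfl
  have h12 : t₁ * t₂ = 1 := rho_faithful g hone
  calc t₁ = (t₁ * t₂) * t₂ := by rw [mul_assoc, h₂.mul_self, mul_one]
  _ = t₂ := by rw [h12, one_mul]

lemma beta_repr_nonneg {t : W} (ht : cs.IsReflection t) (b : B) :
    0 ≤ g.α.repr (g.β t) b := by
  obtain ⟨c, hc, hsum⟩ := g.β_pos t ht
  have h : g.β t = Finsupp.linearCombination ℝ g.α c := by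
    rw [hsum, Finsupp.linearCombination_apply]
  rw [h, g.α.repr_linearCombination]
  exact hc b

lemma beta_ne_zero {t : W} (ht : cs.IsReflection t) : g.β t ≠ 0 := by
  obtain ⟨w, i, rfl⟩ := ht
  rcases g.β_root w i with hβ | hβ <;> rw [hβ]
  · intro h
    exact g.α.ne_zero i ((g.ρ w).map_eq_zero_iff.mp h)
  · intro h
    rw [neg_eq_zero] at h
    exact g.α.ne_zero i ((g.ρ w).map_eq_zero_iff.mp h)

lemma beta_conj_simple {t : W} (ht : cs.IsReflection t) (x : B) :
    g.β (cs.simple x * t * (cs.simple x)⁻¹) = g.ρ (cs.simple x) (g.β t)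
    ∨ g.β (cs.simple x * t * (cs.simple x)⁻¹) = -(g.ρ (cs.simple x) (g.β t)) := by
  obtain ⟨w, i, rfl⟩ := ht
  have e : cs.simple x * (w * cs.simple i * w⁻¹) * (cs.simple x)⁻¹
      = (cs.simple x * w) * cs.simple i * (cs.simple x * w)⁻¹ := by group
  rcases g.β_root (cs.simple x * w) i with h | h <;> rcases g.β_root w i with h' | h'
  · left; rw [e, h, rho_mul_apply, ← h']
  · right
    have h'' : g.ρ w (g.α i) = -(g.β (w * cs.simple i * w⁻¹)) := by rw [h']; simp
    rw [e, h, rho_mul_apply, h'', map_neg]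
  · right; rw [e, h, rho_mul_apply, ← h']
  · left
    have h'' : g.ρ w (g.α i) = -(g.β (w * cs.simple i * w⁻¹)) := by rw [h']; simp
    rw [e, h, rho_mul_apply, h'', map_neg, neg_neg]

end CGRAux

open CGRAux in
/-- Let `c` be the Coxeter element with reduced word `s :: l₀` (so that
`s` is initial in `c`), let `E_c` be the Euler form, and let
`ω_c(β, β') = E_c(β, β') - E_c(β', β)` be its antisymmetrization.  Then for every
reflection `t` of `W` we have `ω_c(α_s, β_t) ≥ 0`, with equality only if `s` and `t`
commute. -/
theorem omega_nonneg_of_initial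
    {B W V : Type*} [Group W] [AddCommGroup V] [Module ℝ V]
    {M : CoxeterMatrix B} (cs : CoxeterSystem M W) (g : CoxeterGeomRep M cs V)
    (s : B) (l₀ : List B) (hnd : (s :: l₀).Nodup) (hall : ∀ b : B, b ∈ s :: l₀)
    (F : V →ₗ[ℝ] V →ₗ[ℝ] ℝ) (hF : IsEulerForm cs g (s :: l₀) F)
    (t : W) (ht : cs.IsReflection t) :
    0 ≤ F (g.α s) (g.β t) - F (g.β t) (g.α s) ∧
    (F (g.α s) (g.β t) - F (g.β t) (g.α s) = 0 → Commute (cs.simple s) t) := by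
  classical
  set l : List B := s :: l₀ with hl
  have hlt : ∀ b : B, l.idxOf b < l.length := fun b =>
    List.idxOf_lt_length_iff.mpr (hall b)
  have hget : ∀ b : B, l.get ⟨l.idxOf b, hlt b⟩ = b := fun b =>
    List.idxOf_get (hlt b)
  have key : ∀ b b' : B, (g.δ b)⁻¹ * F (g.α b) (g.α b')
      = if l.idxOf b' < l.idxOf b then g.a b b'
        else if l.idxOf b = l.idxOf b' then 1 else 0 := by
    intro b b'
    have h := hF ⟨l.idxOf b, hlt b⟩ ⟨l.idxOf b', hlt b'⟩
    rw [hget, hget] at h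
    rw [map_smul, LinearMap.smul_apply, smul_eq_mul] at h
    exact h
  have hidx0 : l.idxOf s = 0 := List.idxOf_cons_self
  have hidxne : ∀ b : B, b ≠ s → l.idxOf b ≠ 0 := by
    intro b hb
    rw [hl, List.idxOf_cons_ne l₀ (Ne.symm hb)]
    exact Nat.succ_ne_zero _
  have hδs : g.δ s ≠ 0 := ne_of_gt (g.δ_pos s)
  have hFss : F (g.α s) (g.α s) = g.δ s := by
    have h := key s s
    rw [if_neg (lt_irrefl _), if_pos rfl] at h
    field_simp at h
    linarith [h]
  have hFs0 : ∀ b : B, b ≠ s → F (g.α s) (g.α b) = 0 := by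
    intro b hb
    have h := key s b
    rw [hidx0, if_neg (by omega), if_neg (fun hc => (hidxne b hb) hc.symm)] at h
    field_simp at h
    simpa using h
  have hFb : ∀ b : B, b ≠ s → F (g.α b) (g.α s) = g.δ b * g.a b s := by
    intro b hb
    have h := key b s
    rw [hidx0, if_pos (by have := hidxne b hb; omega)] at h
    have hδb : g.δ b ≠ 0 := ne_of_gt (g.δ_pos b)
    field_simp at h
    linarith [h]
  set c := g.α.repr (g.β t) with hc
  have hcnn : ∀ b, 0 ≤ c b := fun b => beta_repr_nonneg g ht b
  have hrepr : g.β t = Finsupp.linearCombination ℝ g.α c :=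
    (g.α.linearCombination_repr (g.β t)).symm
  have hFsum1 : F (g.α s) (g.β t) = ∑ b ∈ c.support, c b * F (g.α s) (g.α b) := by
    conv_lhs => rw [hrepr]
    rw [Finsupp.linearCombination_apply, Finsupp.sum, map_sum]
    exact Finset.sum_congr rfl fun b _ => by rw [map_smul, smul_eq_mul]
  have hFsum2 : F (g.β t) (g.α s) = ∑ b ∈ c.support, c b * F (g.α b) (g.α s) := by
    conv_lhs => rw [hrepr]
    rw [Finsupp.linearCombination_apply, Finsupp.sum, map_sum, LinearMap.sum_apply]
    exact Finset.sum_congr rfl fun b _ => by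
      rw [map_smul, LinearMap.smul_apply, smul_eq_mul]
  have hdiff : F (g.α s) (g.β t) - F (g.β t) (g.α s)
      = ∑ b ∈ c.support, (if b = s then 0 else c b * (g.δ b * (- g.a b s))) := by
    rw [hFsum1, hFsum2, ← Finset.sum_sub_distrib]
    apply Finset.sum_congr rfl
    intro b _
    by_cases hb : b = s
    · subst hb; rw [if_pos rfl]; ring
    · rw [if_neg hb, hFs0 b hb, hFb b hb]; ring
  have hterm : ∀ b ∈ c.support, 0 ≤ (if b = s then 0 else c b * (g.δ b * (- g.a b s))) := by
    intro b _
    by_cases hb : b = s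
    · rw [if_pos hb]
    · rw [if_neg hb]
      exact mul_nonneg (hcnn b) (mul_nonneg (le_of_lt (g.δ_pos b))
        (neg_nonneg.mpr (g.a_offdiag b s hb)))
  constructor
  · rw [hdiff]
    exact Finset.sum_nonneg hterm
  · intro h0
    rw [hdiff] at h0
    have hz := (Finset.sum_eq_zero_iff_of_nonneg hterm).mp h0
    have hvanish : ∀ b : B, b ≠ s → c b ≠ 0 → g.a s b = 0 := by
      intro b hb hcb
      have hmem : b ∈ c.support := Finsupp.mem_support_iff.mpr hcb
      have h1 := hz b hmem
      rw [if_neg hb] at h1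
      have h2 : g.a b s = 0 := by
        have hδb := g.δ_pos b
        have hcb' := hcnn b
        rcases mul_eq_zero.mp h1 with h | h
        · exact absurd h hcb
        · rcases mul_eq_zero.mp h with h' | h'
          · linarith
          · linarith
      exact (g.a_zero s b).mpr h2
    -- the form value
    have hK : Kf g (g.α s) (g.β t) = 2 * g.δ s * c s := by
      conv_lhs => rw [hrepr]
      rw [Finsupp.linearCombination_apply, Finsupp.sum, map_sum]
      rw [Finset.sum_eq_single s]
      · rw [map_smul, smul_eq_mul, Kf_basis, g.a_diag]; ring
      · intro b hmem hb
        rw [map_smul, smul_eq_mul, Kf_basis,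
          hvanish b hb (Finsupp.mem_support_iff.mp hmem)]
        ring
      · intro hnmem
        rw [Finsupp.notMem_support_iff.mp hnmem]
        simp
    have hrs : g.ρ (cs.simple s) (g.β t) = g.β t - (2 * c s) • g.α s := by
      rw [rho_simple_apply g s (g.β t), hK]
      congr 2
      field_simp
    set t' := cs.simple s * t * (cs.simple s)⁻¹ with ht'def
    have ht' : cs.IsReflection t' := ht.conj (cs.simple s)
    have hb' := beta_conj_simple g ht s
    have hcomm : t' = t → Commute (cs.simple s) t := by
      intro htt
      show cs.simple s * t = t * cs.simple s
      calc cs.simple s * t = (cs.simple s * t * (cs.simple s)⁻¹) * cs.simple s := by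
            group
      _ = t * cs.simple s := by rw [← ht'def, htt]
    have hβteq : g.β t' = g.β t := by
      by_cases hcs : c s = 0
      · have hrs2 : g.ρ (cs.simple s) (g.β t) = g.β t := by
          rw [hrs, hcs]; simp
        rcases hb' with h | h
        · rw [← ht'def] at h; rw [h, hrs2]
        · exfalso
          rw [← ht'def] at h
          rw [hrs2] at h
          have hzero : ∀ b, c b = 0 := by
            intro b
            have h1 := beta_repr_nonneg g ht' b
            rw [h] at h1
            simp only [map_neg, Finsupp.coe_neg, Pi.neg_apply] at h1
            have h2 := hcnn b
            rw [← hc] at h1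
            linarith
          have : g.β t = 0 := by
            have : c = 0 := Finsupp.ext hzero
            rw [hc] at this
            exact (LinearEquiv.map_eq_zero_iff _).mp this
          exact beta_ne_zero g ht this
      · have hcs' : 0 < c s := lt_of_le_of_ne (hcnn s) (Ne.symm hcs)
        rcases hb' with h | h
        · exfalso
          rw [← ht'def] at h
          have h1 := beta_repr_nonneg g ht' s
          rw [h, hrs] at h1
          simp only [map_sub, map_smul, Module.Basis.repr_self, Finsupp.coe_sub, Finsupp.coe_smul,
            Pi.sub_apply, Pi.smul_apply, smul_eq_mul] at h1
          rw [Finsupp.single_eq_same, ← hc] at h1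
          linarith
        · rw [← ht'def] at h
          have hcoord : ∀ b, b ≠ s → c b = 0 := by
            intro b hb
            have h1 := beta_repr_nonneg g ht' b
            rw [h, hrs] at h1
            simp only [map_neg, map_sub, map_smul, Module.Basis.repr_self, Finsupp.coe_neg,
              Finsupp.coe_sub, Finsupp.coe_smul, Pi.neg_apply, Pi.sub_apply, Pi.smul_apply,
              smul_eq_mul] at h1
            rw [Finsupp.single_eq_of_ne hb, ← hc] at h1
            have h2 := hcnn b
            simp at h1
            linarith
          have hβt : g.β t = c s • g.α s := by
            apply g.α.repr.injective
            ext b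
            rw [← hc, map_smul, Module.Basis.repr_self]
            by_cases hb : b = s
            · subst hb
              simp [Finsupp.single_eq_same]
            · rw [hcoord b hb]
              simp [Finsupp.single_eq_of_ne hb]
          rw [h, hrs, hβt]
          module
    exact hcomm (beta_inj g ht' ht hβteq)
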